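/- arXiv:2508.20342 — 2 statements merged into one kernel-verified Lean document; each statement's English description precedes it below -/
import Mathlib

section
/- Let 0 < α < n, 0 < p ≤ 1, N = ⌊n(1/p−1)⌋+1, 1/q = 1/p − α/n, q̃ = q(n+N)/n and 1/p̃ = 1/q̃ + α/(n+N). Then p̃ > 1, q̃ > 1, p̃/q̃ = p/q, and for any discrete cube Q ⊂ ℤⁿ, Σ_{j∈ℤⁿ} [M_{αn/(n+N)}(χ_Q)(j)]^{q̃} ≤ C(#Q)^{q/p}, with C independent of Q. -/
open scoped BigOperators ENNReal

noncomputable section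

/-- Euclidean norm of an integer vector in `ℤⁿ`. -/
def znorm {n : ℕ} (j : Fin n → ℤ) : ℝ := Real.sqrt (∑ l, ((j l : ℝ)) ^ 2)

/-- `ℓ^∞` norm of an integer vector, as a natural number. -/
def zinf {n : ℕ} (j : Fin n → ℤ) : ℕ := Finset.univ.sup fun l => (j l).natAbs

/-- The discrete cube centered at `k0` with "radius" `m` (side length `2m+1`),
i.e. `{i : |i - k0|_∞ ≤ m}`. -/
def dcube {n : ℕ} (k0 : Fin n → ℤ) (m : ℕ) : Finset (Fin n → ℤ) :=
  Finset.Icc (fun l => k0 l - m) (fun l => k0 l + m)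

/-- The discrete Riesz potential `(I_α b)(j) = ∑_{i ≠ j} b(i) |i-j|^{α-n}`. -/
def rieszPot {n : ℕ} (α : ℝ) (b : (Fin n → ℤ) → ℝ) (j : Fin n → ℤ) : ℝ :=
  ∑' i : {i : Fin n → ℤ // i ≠ j}, b i.1 * znorm (i.1 - j) ^ (α - n)

/-- Embedding of `ℤⁿ` into Euclidean space `ℝⁿ`. -/
def toE {n : ℕ} (j : Fin n → ℤ) : EuclideanSpace ℝ (Fin n) := WithLp.toLp 2 (fun l => (j l : ℝ))

/-- The discretized dilation `Φ_t^d(j) = t^{-n} Φ(j/t)` for `j ≠ 0`, and `Φ_t^d(0) = 0`. -/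
def phid {n : ℕ} (Φ : SchwartzMap (EuclideanSpace ℝ (Fin n)) ℝ) (t : ℝ) (j : Fin n → ℤ) : ℝ :=
  if j = 0 then 0 else t ^ (-(n : ℝ)) * Φ (t⁻¹ • toE j)

/-- Discrete convolution `(b ∗ c)(j) = ∑_i b(i) c(j-i)`. -/
def dconv {n : ℕ} (b c : (Fin n → ℤ) → ℝ) (j : Fin n → ℤ) : ℝ :=
  ∑' i : Fin n → ℤ, b i * c (j - i)

/-- The maximal function `sup_{t>0} |(Φ_t^d ∗ b)(j)|`, valued in `ℝ≥0∞`. -/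
def maxFn {n : ℕ} (Φ : SchwartzMap (EuclideanSpace ℝ (Fin n)) ℝ) (b : (Fin n → ℤ) → ℝ)
    (j : Fin n → ℤ) : ℝ≥0∞ :=
  ⨆ (t : ℝ) (_ : 0 < t), ENNReal.ofReal |dconv (phid Φ t) b j|

/-- The `ℓ^p` quasinorm (`0 < p < ∞`) of a real sequence on `ℤⁿ`, valued in `ℝ≥0∞`. -/
def elp {n : ℕ} (p : ℝ) (f : (Fin n → ℤ) → ℝ) : ℝ≥0∞ :=
  (∑' j : Fin n → ℤ, ENNReal.ofReal |f j| ^ p) ^ (1 / p)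

/-- The `ℓ^p` quasinorm of an `ℝ≥0∞`-valued sequence on `ℤⁿ`. -/
def elpE {n : ℕ} (p : ℝ) (f : (Fin n → ℤ) → ℝ≥0∞) : ℝ≥0∞ :=
  (∑' j : Fin n → ℤ, f j ^ p) ^ (1 / p)

/-- The discrete Hardy space quasinorm `‖b‖_{H^p} = ‖b‖_{ℓ^p} + ‖sup_{t>0}|Φ_t^d ∗ b|‖_{ℓ^p}`. -/
def hpNorm {n : ℕ} (Φ : SchwartzMap (EuclideanSpace ℝ (Fin n)) ℝ) (p : ℝ)
    (b : (Fin n → ℤ) → ℝ) : ℝ≥0∞ :=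
  elp p b + elpE p (maxFn Φ b)

/-- A `(p, ∞, N)`-atom supported in the discrete cube `dcube k0 m`. -/
def IsDiscreteAtom {n : ℕ} (p : ℝ) (N : ℕ) (k0 : Fin n → ℤ) (m : ℕ)
    (a : (Fin n → ℤ) → ℝ) : Prop :=
  (∀ j, j ∉ dcube k0 m → a j = 0) ∧
  (∀ j, |a j| ≤ ((dcube k0 m).card : ℝ) ^ (-(1 / p))) ∧
  (∀ β : Fin n → ℕ, (∑ l, β l) ≤ N →
    ∑ j ∈ dcube k0 m, (∏ l, ((j l : ℝ)) ^ β l) * a j = 0)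

/-- The centered discrete fractional maximal operator
`(M_α b)(j) = sup_m (#Q_{j,m})^{α/n - 1} ∑_{i ∈ Q_{j,m}} |b(i)|`. -/
def fracMax {n : ℕ} (α : ℝ) (b : (Fin n → ℤ) → ℝ) (j : Fin n → ℤ) : ℝ≥0∞ :=
  ⨆ m : ℕ, ENNReal.ofReal
    ((((dcube j m).card : ℝ) ^ (α / n - 1)) * ∑ i ∈ dcube j m, |b i|)

/-- The Taylor polynomial of degree `N - 1` of `f` centered at `c`, evaluated at `x`. -/
def taylorPoly {n : ℕ} (f : EuclideanSpace ℝ (Fin n) → ℝ) (c x : EuclideanSpace ℝ (Fin n))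
    (N : ℕ) : ℝ :=
  ∑ r ∈ Finset.range N, (1 / r.factorial : ℝ) * iteratedFDeriv ℝ r f c (fun _ => x - c)


namespace S17

lemma zinf_le_iff {n : ℕ} {j : Fin n → ℤ} {m : ℕ} : zinf j ≤ m ↔ ∀ l, (j l).natAbs ≤ m := by
  simp [zinf, Finset.sup_le_iff]

lemma mem_dcube {n : ℕ} {k0 i : Fin n → ℤ} {m : ℕ} :
    i ∈ dcube k0 m ↔ zinf (i - k0) ≤ m := by
  simp only [dcube, Finset.mem_Icc, zinf_le_iff, Pi.le_def, Pi.sub_apply]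
  constructor
  · rintro ⟨h1, h2⟩ l; have := h1 l; have := h2 l; omega
  · intro h; constructor <;> intro l <;> (have := h l; omega)

lemma card_dcube {n : ℕ} (k0 : Fin n → ℤ) (m : ℕ) :
    (dcube k0 m).card = (2 * m + 1) ^ n := by
  rw [dcube, Pi.card_Icc]
  have : ∀ l : Fin n, (Finset.Icc (k0 l - m) (k0 l + m)).card = 2 * m + 1 := by
    intro l; rw [Int.card_Icc]; omega
  simp [this]

lemma zinf_sub_comm {n : ℕ} (a b : Fin n → ℤ) : zinf (a - b) = zinf (b - a) := by
  unfold zinf; congr 1; ext l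
  rw [Pi.sub_apply, Pi.sub_apply, ← neg_sub (b l), Int.natAbs_neg]

lemma zinf_triangle {n : ℕ} (a b c : Fin n → ℤ) :
    zinf (a - c) ≤ zinf (a - b) + zinf (b - c) := by
  apply Finset.sup_le
  intro l _
  have h1 : ((a - b) l).natAbs ≤ zinf (a - b) :=
    Finset.le_sup (f := fun l => ((a - b) l).natAbs) (Finset.mem_univ l)
  have h2 : ((b - c) l).natAbs ≤ zinf (b - c) :=
    Finset.le_sup (f := fun l => ((b - c) l).natAbs) (Finset.mem_univ l)
  simp only [Pi.sub_apply] at *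
  omega



lemma key1d {ε : ℝ} (hε : 0 < ε) {a : ℝ} (ha : 1 ≤ a) :
    ε / 2 ^ (1 + ε) * a ^ (-(1 + ε)) ≤ a ^ (-ε) - (a + 1) ^ (-ε) := by
  have ha0 : (0:ℝ) < a := lt_of_lt_of_le one_pos ha
  set u : ℝ := 1 / a with hu
  have hu0 : 0 < u := by positivity
  have hu1 : u ≤ 1 := by rw [hu]; rw [div_le_one ha0]; linarith
  have h1u : (0:ℝ) < 1 + u := by linarith
  -- Bernoulli
  have hbern : 1 + (1 + ε) * u ≤ (1 + u) ^ (1 + ε) :=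
    one_add_mul_self_le_rpow_one_add (by linarith) (by linarith)
  have hP : (0:ℝ) < (1 + u) ^ (1 + ε) := Real.rpow_pos_of_pos h1u _
  set P : ℝ := (1 + u) ^ (1 + ε) with hPdef
  -- (1+u)^(-ε) = (1+u) / P
  have hsplit : (1 + u) ^ (-ε) = (1 + u) / P := by
    have he : -ε = 1 - (1 + ε) := by ring
    rw [hPdef, he, Real.rpow_sub h1u, Real.rpow_one]
  have h3 : (1 + u) ^ (-ε) ≤ 1 - ε * u / P := by
    rw [hsplit, div_le_iff₀ hP, sub_mul, one_mul, div_mul_cancel₀ _ (ne_of_gt hP)]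
    have : 1 + u + ε * u ≤ P := by rw [hPdef]; nlinarith [hbern]
    linarith
  -- a + 1 = a * (1 + u)
  have hfac : a + 1 = a * (1 + u) := by
    rw [hu, mul_add, mul_one, mul_one_div, div_self (ne_of_gt ha0)]
  have hmul : (a + 1) ^ (-ε) = a ^ (-ε) * (1 + u) ^ (-ε) := by
    rw [hfac, Real.mul_rpow (le_of_lt ha0) (le_of_lt h1u)]
  have haε : (0:ℝ) < a ^ (-ε) := Real.rpow_pos_of_pos ha0 _
  have hstep : a ^ (-ε) - (a + 1) ^ (-ε) ≥ a ^ (-ε) * (ε * u / P) := by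
    rw [hmul]
    nlinarith [h3, haε]
  -- P ≤ 2^(1+ε)
  have hPle : P ≤ 2 ^ (1 + ε) := by
    rw [hPdef]
    exact Real.rpow_le_rpow (by linarith) (by linarith) (by linarith)
  have h2pos : (0:ℝ) < (2:ℝ) ^ (1 + ε) := Real.rpow_pos_of_pos two_pos _
  -- a^(-ε) * u = a^(-(1+ε))
  have hcomb : a ^ (-ε) * u = a ^ (-(1 + ε)) := by
    rw [hu, one_div, ← Real.rpow_neg_one a, ← Real.rpow_add ha0]
    ring_nf
  have hfinal : ε / 2 ^ (1 + ε) * a ^ (-(1 + ε)) ≤ a ^ (-ε) * (ε * u / P) := by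
    rw [← hcomb]
    have h1 : ε * u / 2 ^ (1 + ε) ≤ ε * u / P := by gcongr
    calc ε / 2 ^ (1 + ε) * (a ^ (-ε) * u) = a ^ (-ε) * (ε * u / 2 ^ (1 + ε)) := by ring
      _ ≤ a ^ (-ε) * (ε * u / P) := mul_le_mul_of_nonneg_left h1 haε.le
  linarith [hstep, hfinal]

lemma telescope (g : ℕ → ℝ) (M : ℕ) :
    ∀ T, M ≤ T + 1 → ∑ D ∈ Finset.Icc M T, (g D - g (D + 1)) = g M - g (T + 1) := by
  intro T
  induction T with
  | zero =>
    intro hM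
    interval_cases M
    · simp
    · simp
  | succ T ih =>
    intro hM
    rcases Nat.lt_or_ge M (T + 2) with h | h
    · have h' : M ≤ T + 1 := by omega
      rcases Nat.lt_or_ge M (T + 1) with h2 | h2
      · rw [Finset.sum_Icc_succ_top h', ih (by omega)]; ring
      · have : M = T + 1 := by omega
        subst this
        simp
    · have : M = T + 2 := by omega
      subst this
      rw [Finset.Icc_eq_empty (by omega)]
      simp



lemma pow_sub_pow_le' {a b : ℝ} (hb : 0 ≤ b) (hab : b ≤ a) (n : ℕ) :
    a ^ n - b ^ n ≤ n * a ^ (n - 1) * (a - b) := by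
  rw [← geom_sum₂_mul a b n]
  have ha : 0 ≤ a := le_trans hb hab
  have hsum : ∑ i ∈ Finset.range n, a ^ i * b ^ (n - 1 - i) ≤ n * a ^ (n - 1) := by
    calc ∑ i ∈ Finset.range n, a ^ i * b ^ (n - 1 - i)
        ≤ ∑ _i ∈ Finset.range n, a ^ (n - 1) := by
          apply Finset.sum_le_sum
          intro i hi
          have hi' : i ≤ n - 1 := by have := Finset.mem_range.mp hi; omega
          calc a ^ i * b ^ (n - 1 - i) ≤ a ^ i * a ^ (n - 1 - i) := by
                apply mul_le_mul_of_nonneg_left (pow_le_pow_left₀ hb hab _) (pow_nonneg ha _)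
            _ = a ^ (n - 1) := by rw [← pow_add]; congr 1; omega
      _ = n * a ^ (n - 1) := by rw [Finset.sum_const, Finset.card_range, nsmul_eq_mul]
  exact mul_le_mul_of_nonneg_right hsum (by linarith)

/-- Main shell estimate over finite sets, in `ℝ`. -/
lemma shell_sum_le {n : ℕ} (hn : 1 ≤ n) {ε : ℝ} (hε : 0 < ε) {M : ℕ} (hM : 1 ≤ M)
    (s : Finset (Fin n → ℤ)) :
    ∑ v ∈ s, (if M ≤ zinf v then ((zinf v : ℝ)) ^ (-((n : ℝ) + ε)) else 0)
      ≤ (2 * n * 3 ^ (n - 1) * (2 ^ (1 + ε) / ε)) * (M : ℝ) ^ (-ε) := by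
  set c : ℝ := 2 * n * 3 ^ (n - 1) * (2 ^ (1 + ε) / ε) with hc
  have hcpos : 0 < c := by positivity
  set h : (Fin n → ℤ) → ℝ := fun v => if M ≤ zinf v then ((zinf v : ℝ)) ^ (-((n : ℝ) + ε)) else 0
    with hh
  have hnonneg : ∀ v, 0 ≤ h v := by
    intro v; rw [hh]; dsimp only; split
    · positivity
    · exact le_refl 0
  set T : ℕ := s.sup zinf with hT
  have hsub : s ⊆ dcube (0 : Fin n → ℤ) T := by
    intro v hv
    rw [mem_dcube]
    simpa using Finset.le_sup (f := zinf) hv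
  have step1 : ∑ v ∈ s, h v ≤ ∑ v ∈ dcube (0 : Fin n → ℤ) T, h v :=
    Finset.sum_le_sum_of_subset_of_nonneg hsub (fun v _ _ => hnonneg v)
  have hmaps : ∀ v ∈ dcube (0 : Fin n → ℤ) T, zinf v ∈ Finset.range (T + 1) := by
    intro v hv
    rw [Finset.mem_range, Nat.lt_succ_iff]
    have := mem_dcube.mp hv
    simpa using this
  have step2 : ∑ v ∈ dcube (0 : Fin n → ℤ) T, h v
      = ∑ D ∈ Finset.range (T + 1), ∑ v ∈ (dcube (0 : Fin n → ℤ) T).filter (fun v => zinf v = D), h v :=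
    (Finset.sum_fiberwise_of_maps_to hmaps h).symm
  -- bound the inner sums
  have inner_le : ∀ D ∈ Finset.range (T + 1),
      ∑ v ∈ (dcube (0 : Fin n → ℤ) T).filter (fun v => zinf v = D), h v
        ≤ if M ≤ D then c * (((D : ℝ)) ^ (-ε) - (((D : ℕ) + 1 : ℝ)) ^ (-ε)) else 0 := by
    intro D _
    have hinner : ∑ v ∈ (dcube (0 : Fin n → ℤ) T).filter (fun v => zinf v = D), h v
        = ((dcube (0 : Fin n → ℤ) T).filter (fun v => zinf v = D)).card
          * (if M ≤ D then ((D : ℝ)) ^ (-((n : ℝ) + ε)) else 0) := by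
      rw [Finset.sum_congr rfl (fun v hv => ?_), Finset.sum_const, nsmul_eq_mul]
      have hzv : zinf v = D := (Finset.mem_filter.mp hv).2
      rw [hh]; dsimp only; rw [hzv]
    rw [hinner]
    split
    case isTrue hMD =>
      have hD1 : 1 ≤ D := le_trans hM hMD
      have hD0 : (0:ℝ) < (D : ℝ) := by exact_mod_cast hD1
      -- card bound
      have hcard : ((dcube (0 : Fin n → ℤ) T).filter (fun v => zinf v = D)).card
          ≤ (2 * D + 1) ^ n - (2 * D - 1) ^ n := by
        have hsub2 : (dcube (0 : Fin n → ℤ) T).filter (fun v => zinf v = D)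
            ⊆ dcube (0 : Fin n → ℤ) D \ dcube (0 : Fin n → ℤ) (D - 1) := by
          intro v hv
          have hzv : zinf v = D := (Finset.mem_filter.mp hv).2
          rw [Finset.mem_sdiff, mem_dcube, mem_dcube]
          constructor
          · simpa using le_of_eq hzv
          · simp only [sub_zero]
            rw [hzv]; omega
        calc ((dcube (0 : Fin n → ℤ) T).filter (fun v => zinf v = D)).card
            ≤ (dcube (0 : Fin n → ℤ) D \ dcube (0 : Fin n → ℤ) (D - 1)).card := Finset.card_le_card hsub2
          _ = (2 * D + 1) ^ n - (2 * D - 1) ^ n := by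
              rw [Finset.card_sdiff_of_subset (fun v hv => ?_), card_dcube, card_dcube]
              · congr 2; omega
              · rw [mem_dcube] at hv ⊢; omega
      have hble : ((2 * D - 1 : ℕ)) ^ n ≤ ((2 * D + 1 : ℕ)) ^ n :=
        Nat.pow_le_pow_left (by omega) n
      have hcardR : (((dcube (0 : Fin n → ℤ) T).filter (fun v => zinf v = D)).card : ℝ)
          ≤ ((2 * D + 1 : ℕ) : ℝ) ^ n - ((2 * D - 1 : ℕ) : ℝ) ^ n := by
        calc (((dcube (0 : Fin n → ℤ) T).filter (fun v => zinf v = D)).card : ℝ)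
            ≤ (((2 * D + 1) ^ n - (2 * D - 1) ^ n : ℕ) : ℝ) := by exact_mod_cast hcard
          _ = ((2 * D + 1 : ℕ) : ℝ) ^ n - ((2 * D - 1 : ℕ) : ℝ) ^ n := by
              rw [Nat.cast_sub hble]; push_cast; ring
      -- difference of powers
      have hdiff : ((2 * D + 1 : ℕ) : ℝ) ^ n - ((2 * D - 1 : ℕ) : ℝ) ^ n
          ≤ 2 * n * 3 ^ (n - 1) * (D : ℝ) ^ (n - 1) := by
        have h1 : ((2 * D + 1 : ℕ) : ℝ) ^ n - ((2 * D - 1 : ℕ) : ℝ) ^ n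
            ≤ n * ((2 * D + 1 : ℕ) : ℝ) ^ (n - 1)
              * (((2 * D + 1 : ℕ) : ℝ) - ((2 * D - 1 : ℕ) : ℝ)) := by
          exact pow_sub_pow_le' (by positivity)
            (by exact_mod_cast (by omega : (2 * D - 1 : ℕ) ≤ 2 * D + 1)) n
        have h2 : ((2 * D + 1 : ℕ) : ℝ) - ((2 * D - 1 : ℕ) : ℝ) = 2 := by
          have : (2 * D - 1 : ℕ) = 2 * D - 1 := rfl
          push_cast [Nat.cast_sub (by omega : 1 ≤ 2 * D)]
          ring
        have h3 : ((2 * D + 1 : ℕ) : ℝ) ^ (n - 1) ≤ (3 * (D : ℝ)) ^ (n - 1) := by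
          apply pow_le_pow_left₀ (by positivity)
          push_cast
          have h1D : (1:ℝ) ≤ (D:ℝ) := by exact_mod_cast hD1
          linarith
        calc ((2 * D + 1 : ℕ) : ℝ) ^ n - ((2 * D - 1 : ℕ) : ℝ) ^ n
            ≤ n * ((2 * D + 1 : ℕ) : ℝ) ^ (n - 1) * 2 := by rw [← h2]; exact h1
          _ ≤ n * (3 * (D : ℝ)) ^ (n - 1) * 2 := by
              apply mul_le_mul_of_nonneg_right _ (by norm_num)
              exact mul_le_mul_of_nonneg_left h3 (by positivity)
          _ = 2 * n * 3 ^ (n - 1) * (D : ℝ) ^ (n - 1) := by rw [mul_pow]; ring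
      -- rpow merge
      have hmerge : (D : ℝ) ^ (n - 1) * (D : ℝ) ^ (-((n : ℝ) + ε)) = (D : ℝ) ^ (-(1 + ε)) := by
        rw [← Real.rpow_natCast (D : ℝ) (n - 1), ← Real.rpow_add hD0]
        congr 1
        rw [Nat.cast_sub hn]
        push_cast; ring
      have hkey := key1d hε (by exact_mod_cast hD1 : (1:ℝ) ≤ (D:ℝ))
      -- assemble
      have hterm : (((dcube (0 : Fin n → ℤ) T).filter (fun v => zinf v = D)).card : ℝ)
          * (D : ℝ) ^ (-((n : ℝ) + ε))
          ≤ c * (((D : ℝ)) ^ (-ε) - ((D : ℝ) + 1) ^ (-ε)) := by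
        have hrpos : (0:ℝ) ≤ (D : ℝ) ^ (-((n : ℝ) + ε)) := by positivity
        calc (((dcube (0 : Fin n → ℤ) T).filter (fun v => zinf v = D)).card : ℝ)
            * (D : ℝ) ^ (-((n : ℝ) + ε))
            ≤ (2 * n * 3 ^ (n - 1) * (D : ℝ) ^ (n - 1)) * (D : ℝ) ^ (-((n : ℝ) + ε)) :=
              mul_le_mul_of_nonneg_right (hcardR.trans hdiff) hrpos
          _ = 2 * n * 3 ^ (n - 1) * (D : ℝ) ^ (-(1 + ε)) := by
              rw [← hmerge]; ring
          _ ≤ 2 * n * 3 ^ (n - 1) * ((2 ^ (1 + ε) / ε) * (((D : ℝ)) ^ (-ε) - ((D : ℝ) + 1) ^ (-ε))) := by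
              apply mul_le_mul_of_nonneg_left _ (by positivity)
              calc (D:ℝ) ^ (-(1 + ε))
                  = (2 ^ (1 + ε) / ε) * (ε / 2 ^ (1 + ε) * (D:ℝ) ^ (-(1 + ε))) := by
                    have h2e : (0:ℝ) < 2 ^ (1 + ε) := Real.rpow_pos_of_pos two_pos _
                    field_simp
                _ ≤ (2 ^ (1 + ε) / ε) * (((D:ℝ)) ^ (-ε) - ((D:ℝ) + 1) ^ (-ε)) :=
                    mul_le_mul_of_nonneg_left hkey (by positivity)
          _ = c * (((D : ℝ)) ^ (-ε) - ((D : ℝ) + 1) ^ (-ε)) := by rw [hc]; ring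
      exact hterm
    case isFalse hMD =>
      simp
  -- sum the bounds and telescope
  have step3 : ∑ D ∈ Finset.range (T + 1),
      (if M ≤ D then c * (((D : ℝ)) ^ (-ε) - (((D : ℕ) + 1 : ℝ)) ^ (-ε)) else 0)
      ≤ c * (M : ℝ) ^ (-ε) := by
    rw [← Finset.sum_filter]
    have hfil : (Finset.range (T + 1)).filter (fun D => M ≤ D) = Finset.Icc M T := by
      ext x; simp only [Finset.mem_filter, Finset.mem_range, Finset.mem_Icc, Nat.lt_succ_iff]
      omega
    rw [hfil]
    by_cases hMT : M ≤ T + 1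
    · have heq : ∑ D ∈ Finset.Icc M T, c * (((D : ℝ)) ^ (-ε) - (((D : ℕ) + 1 : ℝ)) ^ (-ε))
          = c * ∑ D ∈ Finset.Icc M T,
              ((fun k : ℕ => ((k : ℝ)) ^ (-ε)) D - (fun k : ℕ => ((k : ℝ)) ^ (-ε)) (D + 1)) := by
        rw [Finset.mul_sum]
        apply Finset.sum_congr rfl
        intro D _
        push_cast
        ring_nf
      rw [heq, telescope _ _ _ hMT]
      have hg : (0:ℝ) ≤ ((T + 1 : ℕ) : ℝ) ^ (-ε) := by positivity
      have : ((fun k : ℕ => ((k : ℝ)) ^ (-ε)) M - (fun k : ℕ => ((k : ℝ)) ^ (-ε)) (T + 1))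
          ≤ (M : ℝ) ^ (-ε) := by
        simp only
        push_cast at hg ⊢
        linarith
      exact mul_le_mul_of_nonneg_left this hcpos.le
    · rw [Finset.Icc_eq_empty (by omega)]
      simp only [Finset.sum_empty]
      positivity
  calc ∑ v ∈ s, h v ≤ ∑ v ∈ dcube (0 : Fin n → ℤ) T, h v := step1
    _ = _ := step2
    _ ≤ ∑ D ∈ Finset.range (T + 1),
        (if M ≤ D then c * (((D : ℝ)) ^ (-ε) - (((D : ℕ) + 1 : ℝ)) ^ (-ε)) else 0) :=
        Finset.sum_le_sum inner_le
    _ ≤ c * (M : ℝ) ^ (-ε) := step3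



lemma fracMax_indicator_le {n : ℕ} (hn : 1 ≤ n) {δ γ : ℝ} (hδ : δ / (n : ℝ) = γ)
    (hγ0 : 0 ≤ γ) (hγ1 : γ < 1) (k0 : Fin n → ℤ) (m : ℕ) (j : Fin n → ℤ) :
    fracMax δ (fun i => if i ∈ dcube k0 m then (1 : ℝ) else 0) j ≤
      if zinf (j - k0) ≤ 2 * m then
        ENNReal.ofReal (((((2 * m + 1) ^ n : ℕ)) : ℝ) ^ γ)
      else
        ENNReal.ofReal (((((2 * m + 1) ^ n : ℕ)) : ℝ)
          * ((zinf (j - k0) : ℝ)) ^ ((n : ℝ) * (γ - 1))) := by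
  unfold fracMax
  apply iSup_le
  intro r
  have hexp : δ / (n : ℝ) - 1 = γ - 1 := by rw [hδ]
  have hsum : ∑ i ∈ dcube j r, |if i ∈ dcube k0 m then (1 : ℝ) else 0|
      = (((dcube j r) ∩ dcube k0 m).card : ℝ) := by
    have habs : ∀ i : Fin n → ℤ, |if i ∈ dcube k0 m then (1 : ℝ) else 0|
        = if i ∈ dcube k0 m then (1 : ℝ) else 0 := by
      intro i; split <;> norm_num
    rw [Finset.sum_congr rfl (fun i _ => habs i), Finset.sum_ite_mem, Finset.sum_const,
      nsmul_eq_mul, mul_one]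
  rw [hsum, hexp, card_dcube]
  set X : ℕ := ((dcube j r) ∩ dcube k0 m).card with hX
  rcases Nat.eq_zero_or_pos X with hX0 | hX0
  · rw [hX0]
    simp
  -- X ≥ 1
  have hXR : (0 : ℝ) < (X : ℝ) := by exact_mod_cast hX0
  have hXt : X ≤ (2 * r + 1) ^ n := by
    calc X ≤ (dcube j r).card := Finset.card_le_card Finset.inter_subset_left
      _ = (2 * r + 1) ^ n := card_dcube j r
  have hXQ : X ≤ (2 * m + 1) ^ n := by
    calc X ≤ (dcube k0 m).card := Finset.card_le_card Finset.inter_subset_right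
      _ = (2 * m + 1) ^ n := card_dcube k0 m
  split
  case isTrue hnear =>
    apply ENNReal.ofReal_le_ofReal
    have h1 : (((2 * r + 1) ^ n : ℕ) : ℝ) ^ (γ - 1) ≤ (X : ℝ) ^ (γ - 1) :=
      Real.rpow_le_rpow_of_nonpos hXR (by exact_mod_cast hXt) (by linarith)
    calc (((2 * r + 1) ^ n : ℕ) : ℝ) ^ (γ - 1) * (X : ℝ)
        ≤ (X : ℝ) ^ (γ - 1) * (X : ℝ) := mul_le_mul_of_nonneg_right h1 hXR.le
      _ = (X : ℝ) ^ γ := by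
          nth_rewrite 2 [← Real.rpow_one (X : ℝ)]
          rw [← Real.rpow_add hXR]
          norm_num
      _ ≤ ((((2 * m + 1) ^ n : ℕ)) : ℝ) ^ γ :=
          Real.rpow_le_rpow hXR.le (by exact_mod_cast hXQ) hγ0
  case isFalse hfar =>
    apply ENNReal.ofReal_le_ofReal
    set D : ℕ := zinf (j - k0) with hD
    have hD2m : 2 * m + 1 ≤ D := by omega
    -- there is a point in the intersection
    obtain ⟨i, hi⟩ := Finset.card_pos.mp hX0
    have hij : zinf (i - j) ≤ r := mem_dcube.mp (Finset.mem_inter.mp hi).1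
    have hik : zinf (i - k0) ≤ m := mem_dcube.mp (Finset.mem_inter.mp hi).2
    have htri : D ≤ r + m := by
      calc D = zinf (j - k0) := hD
        _ ≤ zinf (j - i) + zinf (i - k0) := zinf_triangle j i k0
        _ = zinf (i - j) + zinf (i - k0) := by rw [zinf_sub_comm j i]
        _ ≤ r + m := Nat.add_le_add hij hik
    have hD2r : D ≤ 2 * r + 1 := by omega
    have hD0 : 0 < D := by omega
    have hDR : (0 : ℝ) < (D : ℝ) := by exact_mod_cast hD0
    have hDn : (D : ℕ) ^ n ≤ (2 * r + 1) ^ n := Nat.pow_le_pow_left hD2r n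
    have h1 : (((2 * r + 1) ^ n : ℕ) : ℝ) ^ (γ - 1) ≤ ((D : ℝ) ^ n) ^ (γ - 1) := by
      apply Real.rpow_le_rpow_of_nonpos (by positivity) _ (by linarith)
      exact_mod_cast hDn
    have h2 : ((D : ℝ) ^ n) ^ (γ - 1) = (D : ℝ) ^ ((n : ℝ) * (γ - 1)) := by
      rw [← Real.rpow_natCast (D : ℝ) n, ← Real.rpow_mul hDR.le]
    calc (((2 * r + 1) ^ n : ℕ) : ℝ) ^ (γ - 1) * (X : ℝ)
        ≤ (D : ℝ) ^ ((n : ℝ) * (γ - 1)) * ((((2 * m + 1) ^ n : ℕ)) : ℝ) := by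
          rw [← h2]
          apply mul_le_mul h1 (by exact_mod_cast hXQ) hXR.le (by positivity)
      _ = ((((2 * m + 1) ^ n : ℕ)) : ℝ) * (D : ℝ) ^ ((n : ℝ) * (γ - 1)) := mul_comm _ _


/-- ENNReal version of the shell estimate. -/
lemma shell_tsum_le {n : ℕ} (hn : 1 ≤ n) {ε : ℝ} (hε : 0 < ε) {M : ℕ} (hM : 1 ≤ M) :
    (∑' v : Fin n → ℤ,
        if M ≤ zinf v then ENNReal.ofReal (((zinf v : ℝ)) ^ (-((n : ℝ) + ε))) else 0)
      ≤ ENNReal.ofReal ((2 * n * 3 ^ (n - 1) * (2 ^ (1 + ε) / ε)) * (M : ℝ) ^ (-ε)) := by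
  apply Summable.tsum_le_of_sum_le ENNReal.summable
  intro s
  have hsw : ∀ v : Fin n → ℤ,
      (if M ≤ zinf v then ENNReal.ofReal (((zinf v : ℝ)) ^ (-((n : ℝ) + ε))) else 0)
        = ENNReal.ofReal (if M ≤ zinf v then ((zinf v : ℝ)) ^ (-((n : ℝ) + ε)) else 0) := by
    intro v; split <;> simp
  rw [Finset.sum_congr rfl (fun v _ => hsw v),
    ← ENNReal.ofReal_sum_of_nonneg (fun v _ => by split <;> positivity)]
  exact ENNReal.ofReal_le_ofReal (shell_sum_le hn hε hM s)

end S17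

set_option maxHeartbeats 3200000 in
/-- with `q̃ = q(n+N)/n` and `1/p̃ = 1/q̃ + α/(n+N)`, one has `p̃ > 1`,
`q̃ > 1`, `p̃/q̃ = p/q`, and `∑_j [M_{αn/(n+N)}(χ_Q)(j)]^{q̃} ≤ C (#Q)^{q/p}` for every
discrete cube `Q`. -/
theorem stmt17 (n : ℕ) (α p q : ℝ) (hα : 0 < α) (hαn : α < n)
    (hp : 0 < p) (hp1 : p ≤ 1) (hq : 1 / q = 1 / p - α / n)
    (N : ℕ) (hN : N = ⌊(n : ℝ) * (1 / p - 1)⌋₊ + 1) :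
    (1 : ℝ) < q * (n + N) / n ∧
    (1 : ℝ) < (1 / (q * (n + N) / n) + α / (n + N))⁻¹ ∧
    (1 / (q * (n + N) / n) + α / (n + N))⁻¹ / (q * (n + N) / n) = p / q ∧
    ∃ C > (0 : ℝ), ∀ (k0 : Fin n → ℤ) (m : ℕ),
      (∑' j : Fin n → ℤ,
          (fracMax (α * n / (n + N))
              (fun i => if i ∈ dcube k0 m then (1 : ℝ) else 0) j) ^ (q * (n + N) / n))
        ≤ ENNReal.ofReal (C * ((dcube k0 m).card : ℝ) ^ (q / p)) := by
  classical
  have hnR : (0 : ℝ) < n := lt_trans hα hαn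
  have hn : 1 ≤ n := Nat.cast_pos.mp hnR
  have hNR : (0 : ℝ) ≤ N := Nat.cast_nonneg N
  have hnN : (0 : ℝ) < (n : ℝ) + N := by linarith
  have hNgt : (n : ℝ) * (1 / p - 1) < N := by
    rw [hN]; push_cast; exact Nat.lt_floor_add_one _
  have h1p : (1 : ℝ) ≤ 1 / p := by rw [le_div_iff₀ hp]; linarith
  have hq0 : (0 : ℝ) < 1 / q := by
    rw [hq]
    have : α / n < 1 := by rw [div_lt_one hnR]; exact hαn
    linarith
  have hqpos : 0 < q := one_div_pos.mp hq0
  have hpp : p * (1 / p) = 1 := by field_simp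
  set γ : ℝ := α / ((n : ℝ) + N) with hγ
  set qt : ℝ := q * ((n : ℝ) + N) / n with hqt
  have hγ0 : 0 < γ := by positivity
  have hγ1 : γ < 1 := by rw [hγ, div_lt_one hnN]; linarith
  have hqt0 : 0 < qt := by positivity
  have hγqt : γ * qt = α * q / n := by rw [hγ, hqt]; field_simp
  have hq' : p * n = (q * n - q * α * p) := by
    field_simp at hq
    linarith [hq]
  have hqp : 1 + γ * qt = q / p := by
    rw [hγqt]
    field_simp
    nlinarith [hq']
  have hqp1 : 1 < q / p := by
    rw [← hqp]
    have : 0 < γ * qt := by positivity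
    linarith
  have hqtqp : q / p < qt := by
    have h1 : 1 / p < ((n : ℝ) + N) / n := by
      rw [div_lt_div_iff₀ hp hnR]
      nlinarith [hNgt, hp, hpp]
    have h2 : q * (1 / p) < q * (((n : ℝ) + N) / n) :=
      mul_lt_mul_of_pos_left h1 hqpos
    calc q / p = q * (1 / p) := by ring
      _ < q * (((n : ℝ) + N) / n) := h2
      _ = qt := by rw [hqt]; ring
  have I2 : 1 / qt + γ = (n : ℝ) / (p * ((n : ℝ) + N)) := by
    rw [hqt, hγ]
    rw [one_div_div]
    rw [div_add_div _ _ (by positivity : q * ((n:ℝ)+N) ≠ 0) (by positivity : (n:ℝ)+N ≠ 0)]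
    rw [div_eq_div_iff (by positivity) (by positivity)]
    linear_combination ((n:ℝ) + (N:ℝ)) ^ 2 * hq'
  refine ⟨?_, ?_, ?_, ?_⟩
  · linarith
  · rw [I2, inv_div, lt_div_iff₀ hnR]
    nlinarith [hNgt, hp, hpp, hnR]
  · rw [I2, inv_div, hqt,
      div_eq_div_iff (by positivity : (0:ℝ) < q * ((n:ℝ)+N) / n).ne' (ne_of_gt hqpos)]
    ring
  -- main estimate
  set ε : ℝ := (n : ℝ) * (1 - γ) * qt - n with hεdef
  have hεeq : ε = (n : ℝ) * (qt - q / p) := by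
    rw [hεdef]; linear_combination (-(n : ℝ)) * hqp
  have hε : 0 < ε := by
    rw [hεeq]
    have hsub : 0 < qt - q / p := by linarith
    exact mul_pos hnR hsub
  set K : ℝ := 2 * (n : ℝ) * 3 ^ (n - 1) * (2 ^ (1 + ε) / ε) with hK
  have hKpos : 0 < K := by
    rw [hK]
    have : (0:ℝ) < 2 ^ (1 + ε) := Real.rpow_pos_of_pos two_pos _
    positivity
  refine ⟨2 ^ n + K, by positivity, ?_⟩
  intro k0 m
  set Mn : ℕ := (2 * m + 1) ^ n with hMn
  have hMnR : (0 : ℝ) < (Mn : ℝ) := by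
    rw [hMn]; positivity
  set b : (Fin n → ℤ) → ℝ := fun i => if i ∈ dcube k0 m then (1 : ℝ) else 0 with hb
  have hδγ : (α * (n : ℝ) / ((n : ℝ) + N)) / (n : ℝ) = γ := by
    rw [hγ]; field_simp
  set F₁ : (Fin n → ℤ) → ℝ≥0∞ := fun j =>
    if zinf (j - k0) ≤ 2 * m then ENNReal.ofReal ((Mn : ℝ) ^ (γ * qt)) else 0 with hF₁
  set F₂ : (Fin n → ℤ) → ℝ≥0∞ := fun j =>
    if zinf (j - k0) ≤ 2 * m then 0
    else ENNReal.ofReal ((Mn : ℝ) ^ qt * ((zinf (j - k0) : ℝ)) ^ (-((n : ℝ) + ε))) with hF₂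
  have hpt : ∀ j, (fracMax (α * (n : ℝ) / ((n : ℝ) + N)) b j) ^ qt ≤ F₁ j + F₂ j := by
    intro j
    have h := S17.fracMax_indicator_le hn hδγ hγ0.le hγ1 k0 m j
    have h2 := ENNReal.rpow_le_rpow h hqt0.le
    by_cases hcase : zinf (j - k0) ≤ 2 * m
    · rw [if_pos hcase] at h2
      rw [hF₁, hF₂]
      simp only [if_pos hcase, add_zero]
      refine le_trans h2 (le_of_eq ?_)
      rw [ENNReal.ofReal_rpow_of_nonneg (by positivity) hqt0.le]
      congr 1
      exact (Real.rpow_mul (by positivity : (0:ℝ) ≤ ((((2 * m + 1) ^ n : ℕ)) : ℝ)) γ qt).symm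
    · rw [if_neg hcase] at h2
      rw [hF₁, hF₂]
      simp only [if_neg hcase, zero_add]
      refine le_trans h2 (le_of_eq ?_)
      have hD1 : 1 ≤ zinf (j - k0) := by omega
      have hDR : (0 : ℝ) < (zinf (j - k0) : ℝ) := by exact_mod_cast hD1
      rw [ENNReal.ofReal_rpow_of_nonneg (by positivity) hqt0.le]
      congr 1
      rw [Real.mul_rpow (by positivity) (by positivity)]
      congr 1
      rw [← Real.rpow_mul hDR.le]
      congr 1
      rw [hεdef]; ring
  have h1 : ∑' j : Fin n → ℤ, F₁ j ≤ ENNReal.ofReal (2 ^ n * (Mn : ℝ) ^ (q / p)) := by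
    have hsupp : ∀ j : Fin n → ℤ, j ∉ dcube k0 (2 * m) → F₁ j = 0 := by
      intro j hj
      rw [hF₁]
      simp only
      rw [if_neg (fun hc => hj (S17.mem_dcube.mpr hc))]
    rw [tsum_eq_sum hsupp]
    have hval : ∀ j ∈ dcube k0 (2 * m), F₁ j ≤ ENNReal.ofReal ((Mn : ℝ) ^ (γ * qt)) := by
      intro j _
      rw [hF₁]
      simp only
      split
      · exact le_refl _
      · exact zero_le
    calc ∑ j ∈ dcube k0 (2 * m), F₁ j
        ≤ ∑ _j ∈ dcube k0 (2 * m), ENNReal.ofReal ((Mn : ℝ) ^ (γ * qt)) :=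
          Finset.sum_le_sum hval
      _ = ((dcube k0 (2 * m)).card : ℝ≥0∞) * ENNReal.ofReal ((Mn : ℝ) ^ (γ * qt)) := by
          rw [Finset.sum_const, nsmul_eq_mul]
      _ = ENNReal.ofReal (((2 * (2 * m) + 1) ^ n : ℕ) : ℝ)
            * ENNReal.ofReal ((Mn : ℝ) ^ (γ * qt)) := by
          rw [S17.card_dcube, ENNReal.ofReal_natCast]
      _ = ENNReal.ofReal ((((2 * (2 * m) + 1) ^ n : ℕ) : ℝ) * (Mn : ℝ) ^ (γ * qt)) := by
          rw [ENNReal.ofReal_mul (by positivity)]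
      _ ≤ ENNReal.ofReal (2 ^ n * (Mn : ℝ) ^ (q / p)) := by
          apply ENNReal.ofReal_le_ofReal
          have hc1 : (((2 * (2 * m) + 1) ^ n : ℕ) : ℝ) ≤ 2 ^ n * (Mn : ℝ) := by
            rw [hMn]
            push_cast
            rw [← mul_pow]
            apply pow_le_pow_left₀ (by positivity)
            linarith
          have hc2 : (Mn : ℝ) * (Mn : ℝ) ^ (γ * qt) = (Mn : ℝ) ^ (q / p) := by
            nth_rewrite 1 [← Real.rpow_one (Mn : ℝ)]
            rw [← Real.rpow_add hMnR, hqp]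
          calc (((2 * (2 * m) + 1) ^ n : ℕ) : ℝ) * (Mn : ℝ) ^ (γ * qt)
              ≤ (2 ^ n * (Mn : ℝ)) * (Mn : ℝ) ^ (γ * qt) :=
                mul_le_mul_of_nonneg_right hc1 (by positivity)
            _ = 2 ^ n * ((Mn : ℝ) * (Mn : ℝ) ^ (γ * qt)) := by ring
            _ = 2 ^ n * (Mn : ℝ) ^ (q / p) := by rw [hc2]
  have h2 : ∑' j : Fin n → ℤ, F₂ j ≤ ENNReal.ofReal (K * (Mn : ℝ) ^ (q / p)) := by
    set Hf : (Fin n → ℤ) → ℝ≥0∞ := fun v =>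
      if 2 * m + 1 ≤ zinf v then ENNReal.ofReal (((zinf v : ℝ)) ^ (-((n : ℝ) + ε))) else 0
      with hHf
    have hsplit : ∀ j : Fin n → ℤ,
        F₂ j = ENNReal.ofReal ((Mn : ℝ) ^ qt) * Hf (j - k0) := by
      intro j
      rw [hF₂, hHf]
      simp only
      by_cases hcase : zinf (j - k0) ≤ 2 * m
      · rw [if_pos hcase, if_neg (by omega), mul_zero]
      · rw [if_neg hcase, if_pos (by omega), ← ENNReal.ofReal_mul (by positivity)]
    calc ∑' j : Fin n → ℤ, F₂ j
        = ∑' j : Fin n → ℤ, ENNReal.ofReal ((Mn : ℝ) ^ qt) * Hf (j - k0) :=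
          tsum_congr hsplit
      _ = ENNReal.ofReal ((Mn : ℝ) ^ qt) * ∑' j : Fin n → ℤ, Hf (j - k0) :=
          ENNReal.tsum_mul_left
      _ = ENNReal.ofReal ((Mn : ℝ) ^ qt) * ∑' v : Fin n → ℤ, Hf v := by
          congr 1
          exact (Equiv.subRight k0).tsum_eq Hf
      _ ≤ ENNReal.ofReal ((Mn : ℝ) ^ qt)
            * ENNReal.ofReal ((2 * n * 3 ^ (n - 1) * (2 ^ (1 + ε) / ε))
              * ((2 * m + 1 : ℕ) : ℝ) ^ (-ε)) := by
          apply mul_le_mul_right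
          exact S17.shell_tsum_le hn hε (by omega)
      _ = ENNReal.ofReal ((Mn : ℝ) ^ qt
            * ((2 * n * 3 ^ (n - 1) * (2 ^ (1 + ε) / ε)) * ((2 * m + 1 : ℕ) : ℝ) ^ (-ε))) :=
          (ENNReal.ofReal_mul (by positivity)).symm
      _ = ENNReal.ofReal (K * (Mn : ℝ) ^ (q / p)) := by
          congr 1
          have hy : (0 : ℝ) < ((2 * m + 1 : ℕ) : ℝ) := by positivity
          have hMny : (Mn : ℝ) = ((2 * m + 1 : ℕ) : ℝ) ^ n := by rw [hMn]; push_cast; ring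
          have e1 : (Mn : ℝ) ^ qt = ((2 * m + 1 : ℕ) : ℝ) ^ ((n : ℝ) * qt) := by
            rw [hMny, ← Real.rpow_natCast ((2 * m + 1 : ℕ) : ℝ) n, ← Real.rpow_mul hy.le]
          have e2 : (Mn : ℝ) ^ (q / p) = ((2 * m + 1 : ℕ) : ℝ) ^ ((n : ℝ) * (q / p)) := by
            rw [hMny, ← Real.rpow_natCast ((2 * m + 1 : ℕ) : ℝ) n, ← Real.rpow_mul hy.le]
          have e3 : ((2 * m + 1 : ℕ) : ℝ) ^ ((n : ℝ) * qt) * ((2 * m + 1 : ℕ) : ℝ) ^ (-ε)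
              = ((2 * m + 1 : ℕ) : ℝ) ^ ((n : ℝ) * qt + -ε) := (Real.rpow_add hy _ _).symm
          have e4 : (n : ℝ) * qt + -ε = (n : ℝ) * (q / p) := by
            rw [hεdef]; linear_combination (n : ℝ) * hqp
          rw [e1, e2, ← e4, ← e3, hK]
          ring
  calc ∑' j : Fin n → ℤ,
      (fracMax (α * (n : ℝ) / ((n : ℝ) + N)) b j) ^ qt
      ≤ ∑' j : Fin n → ℤ, (F₁ j + F₂ j) :=
        Summable.tsum_le_tsum hpt ENNReal.summable ENNReal.summable
    _ = (∑' j : Fin n → ℤ, F₁ j) + ∑' j : Fin n → ℤ, F₂ j := ENNReal.tsum_add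
    _ ≤ ENNReal.ofReal (2 ^ n * (Mn : ℝ) ^ (q / p))
          + ENNReal.ofReal (K * (Mn : ℝ) ^ (q / p)) := add_le_add h1 h2
    _ = ENNReal.ofReal (2 ^ n * (Mn : ℝ) ^ (q / p) + K * (Mn : ℝ) ^ (q / p)) :=
        (ENNReal.ofReal_add (by positivity) (by positivity)).symm
    _ = ENNReal.ofReal ((2 ^ n + K) * (((dcube k0 m).card : ℝ)) ^ (q / p)) := by
        rw [S17.card_dcube, ← hMn]
        congr 1
        ring
end
end

section
/- For every 0 < p ≤ 1, the inclusion H^p(ℤⁿ) ⊂ ℓ^p(ℤⁿ) holds with ‖b‖_{ℓ^p} ≤ ‖b‖_{H^p}, and the inclusion is strict: there exists b ∈ ℓ^p(ℤⁿ) with b ∉ H^p(ℤⁿ). -/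
open scoped BigOperators ENNReal

noncomputable section

private lemma s19_norm_le {n : ℕ} (y : EuclideanSpace ℝ (Fin n)) {M : ℝ} (hM : 0 ≤ M)
    (h : ∀ l, |y l| ≤ M) : ‖y‖ ≤ Real.sqrt n * M := by
  rw [EuclideanSpace.norm_eq]
  have h1 : ∑ l, ‖y l‖ ^ 2 ≤ ∑ _l : Fin n, M ^ 2 :=
    Finset.sum_le_sum fun l _ => by
      rw [Real.norm_eq_abs]; exact pow_le_pow_left₀ (abs_nonneg _) (h l) 2
  calc Real.sqrt (∑ l, ‖y l‖ ^ 2) ≤ Real.sqrt (∑ _l : Fin n, (M : ℝ) ^ 2) :=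
        Real.sqrt_le_sqrt h1
    _ = Real.sqrt ((n : ℝ) * M ^ 2) := by
        rw [Finset.sum_const, Finset.card_univ, Fintype.card_fin, nsmul_eq_mul]
    _ = Real.sqrt n * M := by
        rw [Real.sqrt_mul (by positivity), Real.sqrt_sq hM]

private lemma s19_dcube_card {n : ℕ} (k0 : Fin n → ℤ) (m : ℕ) :
    (dcube k0 m).card = (2 * m + 1) ^ n := by
  rw [dcube, Pi.card_Icc]
  have h : ∀ l : Fin n, (Finset.Icc (k0 l - (m : ℤ)) (k0 l + m)).card = 2 * m + 1 := by
    intro l; rw [Int.card_Icc]; omega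
  simp [h]

private lemma s19_mem_dcube {n : ℕ} {k0 : Fin n → ℤ} {m : ℕ} {j : Fin n → ℤ} :
    j ∈ dcube k0 m ↔ ∀ l, |j l - k0 l| ≤ (m : ℤ) := by
  rw [dcube, Finset.mem_Icc]
  constructor
  · rintro ⟨h1, h2⟩ l
    have a1 := h1 l; have a2 := h2 l
    simp only at a1 a2
    rw [abs_le]; omega
  · intro h
    constructor <;> intro l <;> (have := h l; rw [abs_le] at this; simp only) <;> omega

private lemma s19_dconv_delta {n : ℕ} (Φ : SchwartzMap (EuclideanSpace ℝ (Fin n)) ℝ) (t : ℝ)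
    (j : Fin n → ℤ) :
    dconv (phid Φ t) (fun i => if i = 0 then (1 : ℝ) else 0) j = phid Φ t j := by
  rw [dconv, tsum_eq_single j]
  · simp
  · intro i hij
    have h : j - i ≠ 0 := sub_ne_zero.mpr (Ne.symm hij)
    simp [h]

set_option maxHeartbeats 2000000 in
private lemma s19_tsum_top {n : ℕ} (hn : 0 < n) (Φ : SchwartzMap (EuclideanSpace ℝ (Fin n)) ℝ)
    (x0 : EuclideanSpace ℝ (Fin n)) (c ε : ℝ) (hc : 0 < c) (hε : 0 < ε)
    (hball : ∀ x : EuclideanSpace ℝ (Fin n), ‖x - x0‖ ≤ ε → c ≤ |Φ x|)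
    (l0 : Fin n) (hl0 : x0 l0 ≠ 0)
    (hεa : ε ≤ |x0 l0| * Real.sqrt n / 8)
    (p : ℝ) (hp : 0 < p) (hp1 : p ≤ 1) :
    ∑' j : Fin n → ℤ, maxFn Φ (fun i => if i = 0 then (1 : ℝ) else 0) j ^ p = ⊤ := by
  set sq := Real.sqrt n with hsqdef
  have hsq1 : 1 ≤ sq := by
    rw [hsqdef, show (1 : ℝ) = Real.sqrt 1 by simp]
    exact Real.sqrt_le_sqrt (by exact_mod_cast hn)
  have hsq0 : 0 < sq := lt_of_lt_of_le one_pos hsq1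
  set a := |x0 l0| with hadef
  have ha : 0 < a := abs_pos.mpr hl0
  have hεsq : ε / sq ≤ a / 8 := by
    have h := (div_le_div_iff_of_pos_right hsq0).mpr hεa
    have h2 : a * sq / 8 / sq = a / 8 := by field_simp
    rw [h2] at h; exact h
  set T : ℝ := max (max 1 (8 / a)) (4 * sq / ε) with hTdef
  have hT1 : (1 : ℝ) ≤ T := le_trans (le_max_left _ _) (le_max_left _ _)
  have hT0 : 0 < T := lt_of_lt_of_le one_pos hT1
  have hTa : 8 ≤ a * T := by
    have h : 8 / a ≤ T := le_trans (le_max_right _ _) (le_max_left _ _)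
    rw [div_le_iff₀ ha] at h; linarith
  have hTε : 4 * sq ≤ ε * T := by
    have h : 4 * sq / ε ≤ T := le_max_right _ _
    rw [div_le_iff₀ hε] at h; linarith
  clear_value sq a T
  obtain ⟨t, ht0, htT, htdouble⟩ :
      ∃ t : ℕ → ℝ, (∀ s, 0 < t s) ∧ (∀ s, T ≤ t s) ∧ (∀ s s', s < s' → 2 * t s ≤ t s') := by
    refine ⟨fun s => 2 ^ s * T, fun s => by positivity, ?_, ?_⟩
    · intro s
      have h2 : (1 : ℝ) ≤ 2 ^ s := one_le_pow₀ one_le_two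
      simp only; nlinarith
    · intro s s' hss
      have hpw : (2 : ℝ) ^ (s + 1) ≤ 2 ^ s' := pow_le_pow_right₀ one_le_two hss
      rw [pow_succ] at hpw
      simp only; nlinarith
  have ht1 : ∀ s, (1:ℝ) ≤ t s := fun s => le_trans hT1 (htT s)
  have hεt : ∀ s, 4 * sq ≤ ε * t s := fun s => by nlinarith [htT s, hε.le, hTε]
  set m : ℕ → ℕ := fun s => ⌊ε * t s / (2 * sq)⌋₊ with hmdef
  set k : ℕ → (Fin n → ℤ) := fun s l => round (t s * x0 l) with hkdef
  set B : ℕ → Finset (Fin n → ℤ) := fun s => dcube (k s) (m s) with hBdef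
  -- coordinate bound
  have hcoord : ∀ s, ∀ j ∈ B s, ∀ l, |(j l : ℝ) - t s * x0 l| ≤ ε * t s / sq := by
    intro s j hj l
    have h1 : |j l - k s l| ≤ (m s : ℤ) := s19_mem_dcube.mp hj l
    have h1' : |(j l : ℝ) - (k s l : ℝ)| ≤ (m s : ℝ) := by exact_mod_cast h1
    have h2 : |(k s l : ℝ) - t s * x0 l| ≤ 1 / 2 := by
      have h := abs_sub_round (t s * x0 l)
      rw [abs_sub_comm] at h
      simpa [hkdef] using h
    have hm_le : (m s : ℝ) ≤ ε * t s / (2 * sq) :=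
      Nat.floor_le (div_nonneg (mul_nonneg hε.le (ht0 s).le) (by positivity))
    have hhalf : (1 : ℝ) / 2 ≤ ε * t s / (2 * sq) := by
      rw [le_div_iff₀ (by positivity)]
      nlinarith [hεt s]
    calc |(j l : ℝ) - t s * x0 l| ≤ |(j l : ℝ) - (k s l : ℝ)| + |(k s l : ℝ) - t s * x0 l| :=
          abs_sub_le _ _ _
      _ ≤ (m s : ℝ) + 1 / 2 := add_le_add h1' h2
      _ ≤ ε * t s / (2 * sq) + ε * t s / (2 * sq) := add_le_add hm_le hhalf
      _ = ε * t s / sq := by field_simp; ring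
  have hne : ∀ s, ∀ j ∈ B s, j ≠ (0 : Fin n → ℤ) := by
    intro s j hj h0
    have hc0 := hcoord s j hj l0
    rw [h0] at hc0
    have hz : ((0 : Fin n → ℤ) l0 : ℝ) = 0 := by norm_num
    rw [hz, zero_sub, abs_neg, abs_mul, abs_of_pos (ht0 s), ← hadef] at hc0
    have e1 : ε * t s / sq ≤ a / 8 * t s := by
      have hh := mul_le_mul_of_nonneg_right hεsq (ht0 s).le
      calc ε * t s / sq = ε / sq * t s := by ring
        _ ≤ a / 8 * t s := hh
    linarith [mul_pos ha (ht0 s), e1, hc0]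
  have hdisj : ∀ s s', s < s' → Disjoint (B s) (B s') := by
    intro s s' hss
    rw [Finset.disjoint_left]
    intro j hj hj'
    have h1 := hcoord s j hj l0
    have h2 := hcoord s' j hj' l0
    have hts : t s * 2 ≤ t s' := by linarith [htdouble s s' hss]
    have habs : |t s' * x0 l0 - t s * x0 l0| = (t s' - t s) * a := by
      rw [show t s' * x0 l0 - t s * x0 l0 = (t s' - t s) * x0 l0 by ring, abs_mul,
        abs_of_pos (by nlinarith [ht0 s]), hadef]
    have hkey : (t s' - t s) * a ≤ ε * t s / sq + ε * t s' / sq := by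
      rw [← habs]
      calc |t s' * x0 l0 - t s * x0 l0|
          ≤ |t s' * x0 l0 - (j l0 : ℝ)| + |(j l0 : ℝ) - t s * x0 l0| := abs_sub_le _ _ _
        _ = |(j l0 : ℝ) - t s' * x0 l0| + |(j l0 : ℝ) - t s * x0 l0| := by
            rw [abs_sub_comm]
        _ ≤ ε * t s' / sq + ε * t s / sq := add_le_add h2 h1
        _ = ε * t s / sq + ε * t s' / sq := by ring
    have e1 : ε * t s / sq ≤ a / 8 * t s := by
      have hh := mul_le_mul_of_nonneg_right hεsq (ht0 s).le
      calc ε * t s / sq = ε / sq * t s := by ring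
        _ ≤ a / 8 * t s := hh
    have e2 : ε * t s' / sq ≤ a / 8 * t s' := by
      have hh := mul_le_mul_of_nonneg_right hεsq (ht0 s').le
      calc ε * t s' / sq = ε / sq * t s' := by ring
        _ ≤ a / 8 * t s' := hh
    have e3 : 2 * (a * t s) ≤ a * t s' := by
      have hh := mul_le_mul_of_nonneg_left hts ha.le
      nlinarith
    have e4 : 0 < a * t s := mul_pos ha (ht0 s)
    linarith [hkey, e1, e2, e3, e4]
  -- pointwise lower bound
  have hpoint : ∀ s, ∀ j ∈ B s,
      ENNReal.ofReal (c * t s ^ (-(n : ℝ))) ≤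
        maxFn Φ (fun i => if i = 0 then (1 : ℝ) else 0) j := by
    intro s j hj
    have hjne := hne s j hj
    have htp := ht0 s
    have hnorm : ‖(t s)⁻¹ • toE j - x0‖ ≤ ε := by
      have hb : ∀ l, |((t s)⁻¹ • toE j - x0) l| ≤ ε / sq := by
        intro l
        have h1 := hcoord s j hj l
        have he : ((t s)⁻¹ • toE j - x0) l = ((j l : ℝ) - t s * x0 l) / t s := by
          have : ((t s)⁻¹ • toE j - x0) l = (t s)⁻¹ * (j l : ℝ) - x0 l := by simp [toE, smul_eq_mul]
          rw [this]; field_simp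
        rw [he, abs_div, abs_of_pos htp, div_le_iff₀ htp]
        calc |(j l : ℝ) - t s * x0 l| ≤ ε * t s / sq := h1
          _ = ε / sq * t s := by ring
      have h := s19_norm_le _ (by positivity) hb
      calc ‖(t s)⁻¹ • toE j - x0‖ ≤ Real.sqrt n * (ε / sq) := h
        _ = ε := by rw [← hsqdef]; field_simp
    have hΦc : c ≤ |Φ ((t s)⁻¹ • toE j)| := hball _ hnorm
    have hrp : 0 < t s ^ (-(n : ℝ)) := Real.rpow_pos_of_pos htp _
    have hphid : c * t s ^ (-(n : ℝ)) ≤ |phid Φ (t s) j| := by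
      rw [phid, if_neg hjne, abs_mul, abs_of_pos hrp]
      calc c * t s ^ (-(n : ℝ)) = t s ^ (-(n : ℝ)) * c := by ring
        _ ≤ t s ^ (-(n : ℝ)) * |Φ ((t s)⁻¹ • toE j)| :=
            mul_le_mul_of_nonneg_left hΦc hrp.le
    rw [maxFn]
    refine le_iSup₂_of_le (t s) htp ?_
    rw [s19_dconv_delta]
    exact ENNReal.ofReal_le_ofReal hphid
  set f : (Fin n → ℤ) → ℝ≥0∞ :=
    fun j => maxFn Φ (fun i => if i = 0 then (1 : ℝ) else 0) j ^ p with hfdef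
  set δ : ℝ≥0∞ := ENNReal.ofReal ((ε / (2 * sq)) ^ n * c ^ p) with hδdef
  have hδ0 : δ ≠ 0 := by
    rw [hδdef]
    have : (0:ℝ) < (ε / (2 * sq)) ^ n * c ^ p := by positivity
    exact (ENNReal.ofReal_pos.mpr this).ne'
  have hBcard : ∀ s, (B s).card = (2 * m s + 1) ^ n := fun s => s19_dcube_card _ _
  have hbox : ∀ s, δ ≤ ∑ j ∈ B s, f j := by
    intro s
    have htp := ht0 s
    have hcardlb : ε * t s / (2 * sq) ≤ (2 * (m s) + 1 : ℝ) := by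
      have h1 : ε * t s / (2 * sq) < (m s : ℝ) + 1 := Nat.lt_floor_add_one _
      have h2 : (2 : ℝ) ≤ ε * t s / (2 * sq) := by
        rw [le_div_iff₀ (by positivity)]; linarith [hεt s]
      linarith
    have hreal : (ε / (2 * sq)) ^ n * c ^ p ≤
        ((2 * (m s) + 1 : ℝ)) ^ n * (c * t s ^ (-(n : ℝ))) ^ p := by
      have e1 : (c * t s ^ (-(n : ℝ))) ^ p = c ^ p * t s ^ (-(n : ℝ) * p) := by
        rw [Real.mul_rpow hc.le (Real.rpow_pos_of_pos htp _).le, ← Real.rpow_mul htp.le]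
      have e2 : t s ^ (-(n : ℝ)) ≤ t s ^ (-(n : ℝ) * p) := by
        apply Real.rpow_le_rpow_of_exponent_le (ht1 s)
        have hh : 0 ≤ (n : ℝ) * (1 - p) :=
          mul_nonneg (Nat.cast_nonneg n) (by linarith)
        linarith [hh]
      have e3 : (ε / (2 * sq)) ^ n ≤ ((2 * (m s) + 1 : ℝ)) ^ n * t s ^ (-(n : ℝ)) := by
        rw [Real.rpow_neg htp.le, Real.rpow_natCast,
          show ((2 * (m s) + 1 : ℝ)) ^ n * (t s ^ n)⁻¹ = ((2 * (m s) + 1) / t s) ^ n by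
            rw [div_pow]; ring]
        apply pow_le_pow_left₀ (by positivity)
        rw [div_le_div_iff₀ (by positivity) htp]
        have := (div_le_iff₀ (show (0:ℝ) < 2 * sq by positivity)).mp hcardlb
        linarith
      calc (ε / (2 * sq)) ^ n * c ^ p
          ≤ (((2 * (m s) + 1 : ℝ)) ^ n * t s ^ (-(n : ℝ))) * c ^ p :=
            mul_le_mul_of_nonneg_right e3 (Real.rpow_nonneg hc.le p)
        _ ≤ (((2 * (m s) + 1 : ℝ)) ^ n * t s ^ (-(n : ℝ) * p)) * c ^ p := by
            have hmm := mul_le_mul_of_nonneg_left e2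
              (pow_nonneg (by positivity : (0:ℝ) ≤ 2 * (m s) + 1) n)
            exact mul_le_mul_of_nonneg_right hmm (Real.rpow_nonneg hc.le p)
        _ = ((2 * (m s) + 1 : ℝ)) ^ n * (c * t s ^ (-(n : ℝ))) ^ p := by rw [e1]; ring
    have hsum : ((B s).card : ℝ≥0∞) * ENNReal.ofReal ((c * t s ^ (-(n : ℝ))) ^ p) ≤
        ∑ j ∈ B s, f j := by
      rw [← nsmul_eq_mul]
      apply Finset.card_nsmul_le_sum
      intro j hj
      have h1 := hpoint s j hj
      have h2 : ENNReal.ofReal (c * t s ^ (-(n : ℝ))) ^ p ≤ f j :=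
        ENNReal.rpow_le_rpow h1 hp.le
      rwa [ENNReal.ofReal_rpow_of_pos (by positivity)] at h2
    refine le_trans ?_ hsum
    rw [hBcard s, hδdef, ← ENNReal.ofReal_natCast, ← ENNReal.ofReal_mul (by positivity)]
    apply ENNReal.ofReal_le_ofReal
    calc (ε / (2 * sq)) ^ n * c ^ p ≤
        ((2 * (m s) + 1 : ℝ)) ^ n * (c * t s ^ (-(n : ℝ))) ^ p := hreal
      _ = (((2 * (m s) + 1) ^ n : ℕ) : ℝ) * (c * t s ^ (-(n : ℝ))) ^ p := by push_cast; ring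
  have key : ∀ S : ℕ, (S : ℝ≥0∞) * δ ≤ ∑' j, f j := by
    intro S
    have hpd : Set.PairwiseDisjoint (↑(Finset.range S)) B := by
      intro s _ s' _ hss
      rcases lt_or_gt_of_ne hss with h | h
      · exact hdisj s s' h
      · exact (hdisj s' s h).symm
    calc (S : ℝ≥0∞) * δ = ∑ _s ∈ Finset.range S, δ := by
          rw [Finset.sum_const, Finset.card_range, nsmul_eq_mul]
      _ ≤ ∑ s ∈ Finset.range S, ∑ j ∈ B s, f j := Finset.sum_le_sum fun s _ => hbox s
      _ = ∑ j ∈ (Finset.range S).biUnion B, f j := (Finset.sum_biUnion hpd).symm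
      _ ≤ ∑' j, f j := ENNReal.sum_le_tsum _
  rw [eq_top_iff]
  calc (⊤ : ℝ≥0∞) = (⨆ S : ℕ, (S : ℝ≥0∞)) * δ := by
        rw [ENNReal.iSup_natCast, ENNReal.top_mul hδ0]
    _ = ⨆ S : ℕ, (S : ℝ≥0∞) * δ := by rw [ENNReal.iSup_mul]
    _ ≤ ∑' j, f j := iSup_le key

/-- for `0 < p ≤ 1`, `H^p(ℤⁿ) ⊂ ℓ^p(ℤⁿ)` with `‖b‖_{ℓ^p} ≤ ‖b‖_{H^p}`, and the
inclusion is strict: some `b ∈ ℓ^p(ℤⁿ)` fails to lie in `H^p(ℤⁿ)`. -/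
theorem stmt19 (n : ℕ) (hn : 0 < n)
    (Φ : SchwartzMap (EuclideanSpace ℝ (Fin n)) ℝ) (hΦint : (∫ x, Φ x) = 1)
    (p : ℝ) (hp : 0 < p) (hp1 : p ≤ 1) :
    (∀ b : (Fin n → ℤ) → ℝ, elp p b ≤ hpNorm Φ p b) ∧
    ∃ b : (Fin n → ℤ) → ℝ, elp p b < ⊤ ∧ hpNorm Φ p b = ⊤ := by
  constructor
  · intro b
    unfold hpNorm
    exact le_self_add
  · have hΦne : ∃ x, Φ x ≠ 0 := by
      by_contra h
      push_neg at h
      simp only [h] at hΦint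
      norm_num at hΦint
    obtain ⟨x1, hx1⟩ := hΦne
    have hopen : IsOpen {x : EuclideanSpace ℝ (Fin n) | Φ x ≠ 0} := by
      have : {x : EuclideanSpace ℝ (Fin n) | Φ x ≠ 0} = (fun x => Φ x) ⁻¹' {(0:ℝ)}ᶜ := rfl
      rw [this]
      exact isOpen_compl_singleton.preimage Φ.continuous
    obtain ⟨r, hr0, hrball⟩ := Metric.isOpen_iff.mp hopen x1 hx1
    have hu : ‖EuclideanSpace.single (⟨0, hn⟩ : Fin n) (1 : ℝ)‖ = 1 := by
      rw [EuclideanSpace.norm_single]; norm_num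
    obtain ⟨x0, hΦx0, hx0ne⟩ :
        ∃ x0 : EuclideanSpace ℝ (Fin n), Φ x0 ≠ 0 ∧ x0 ≠ 0 := by
      rcases eq_or_ne x1 0 with h | h
      · have h1 : ‖(r / 2) • EuclideanSpace.single (⟨0, hn⟩ : Fin n) (1 : ℝ)‖ = r / 2 := by
          rw [norm_smul, hu, mul_one, Real.norm_eq_abs,
            abs_of_pos (by linarith : (0:ℝ) < r / 2)]
        refine ⟨(r / 2) • EuclideanSpace.single (⟨0, hn⟩ : Fin n) (1 : ℝ), ?_, ?_⟩
        · apply hrball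
          rw [Metric.mem_ball, dist_eq_norm, h, sub_zero, h1]
          linarith
        · intro h0
          rw [h0, norm_zero] at h1
          linarith
      · exact ⟨x1, hx1, h⟩
    set c := |Φ x0| / 2 with hcdef
    have hc : 0 < c := half_pos (abs_pos.mpr hΦx0)
    have hcont : ContinuousAt (fun x => |Φ x|) x0 :=
      (continuous_abs.comp Φ.continuous).continuousAt
    obtain ⟨d, hd0, hdball⟩ := Metric.continuousAt_iff.mp hcont c hc
    obtain ⟨l0, hl0⟩ : ∃ l, x0 l ≠ 0 := by
      by_contra h
      push_neg at h
      exact hx0ne (by ext l; simpa using h l)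
    have hsqn : 0 < Real.sqrt n := Real.sqrt_pos.mpr (by exact_mod_cast hn)
    have hal0 : 0 < |x0 l0| := abs_pos.mpr hl0
    set ε := min (d / 2) (|x0 l0| * Real.sqrt n / 8) with hεdef
    have hε : 0 < ε := lt_min (by linarith) (by positivity)
    have hball : ∀ x : EuclideanSpace ℝ (Fin n), ‖x - x0‖ ≤ ε → c ≤ |Φ x| := by
      intro x hx
      have hdist : dist x x0 < d := by
        rw [dist_eq_norm]
        calc ‖x - x0‖ ≤ ε := hx
          _ ≤ d / 2 := min_le_left _ _
          _ < d := by linarith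
      have hlt := hdball hdist
      rw [Real.dist_eq] at hlt
      have hlt' := abs_lt.mp hlt
      rw [hcdef]
      rw [hcdef] at hlt'
      linarith [hlt'.1]
    have htop := s19_tsum_top hn Φ x0 c ε hc hε hball l0 hl0 (min_le_right _ _) p hp hp1
    refine ⟨fun i => if i = 0 then (1 : ℝ) else 0, ?_, ?_⟩
    · unfold elp
      have hts : ∑' j : Fin n → ℤ,
          ENNReal.ofReal |if j = 0 then (1 : ℝ) else 0| ^ p = 1 := by
        rw [tsum_eq_single 0]
        · simp
        · intro j hj
          simp only [if_neg hj, abs_zero, ENNReal.ofReal_zero]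
          exact ENNReal.zero_rpow_of_pos hp
      rw [hts, ENNReal.one_rpow]
      exact ENNReal.one_lt_top
    · unfold hpNorm elpE
      rw [htop, ENNReal.top_rpow_of_pos (by positivity : (0:ℝ) < 1 / p), add_top]
end
end
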